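/- arXiv:1112.2335 — 2 statements merged into one kernel-verified Lean document; each statement's English description precedes it below -/
import Mathlib

section
/- Let $n \geq 1$, $0 \leq a \leq n-1$, $b = n - a - 1$, and define $\alpha_{p,1} = a + n$, $\alpha_{p,i} = n - i + 1$ for $2 \leq i \leq b+1$, and $\alpha_{p,i} = n - i$ for $b+2 \leq i \leq n$. Then for $b+3 \leq i \leq n$ we have $\prod_{i'=1}^{i-1}(q^{\alpha_{p,i'}} - q^{\alpha_{p,i}}) = q^{(i-1)(n-i)} \frac{q^{a+i}-1}{q^{i-b-1}-1} \prod_{h=1}^{i-1}(q^h - 1)$ in $\mathbb{Q}(q)$. -/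
open Finset

lemma xpow_ne_one (m : ℕ) (hm : 0 < m) : (RatFunc.X : RatFunc ℚ) ^ (m : ℤ) ≠ 1 := by
  rw [zpow_natCast]
  intro h
  have h2 : (Polynomial.X : Polynomial ℚ) ^ m = 1 := by
    apply RatFunc.algebraMap_injective ℚ
    simpa [map_pow] using h
  have := congrArg Polynomial.natDegree h2
  simp [Polynomial.natDegree_X_pow] at this
  omega

lemma prod_Ioc_int (f : ℤ → RatFunc ℚ) {a b c : ℤ} (h1 : a ≤ b) (h2 : b ≤ c) :
    (∏ h ∈ Ioc a b, f h) * ∏ h ∈ Ioc b c, f h = ∏ h ∈ Ioc a c, f h := by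
  rw [← Finset.prod_union, Finset.Ioc_union_Ioc_eq_Ioc h1 h2]
  simp only [Finset.disjoint_left, Finset.mem_Ioc]
  omega

/-- For `n ≥ 1`, `0 ≤ a ≤ n-1`, `b = n - a - 1` (encoded as `a + b + 1 = n`), with
`α_{p,1} = a+n`, `α_{p,i} = n-i+1` for `2 ≤ i ≤ b+1`, `α_{p,i} = n-i` for `b+2 ≤ i ≤ n`,
and `b+3 ≤ i ≤ n`:
`∏_{i'=1}^{i-1} (q^{α_{p,i'}} - q^{α_{p,i}})
  = q^{(i-1)(n-i)} (q^{a+i}-1)/(q^{i-b-1}-1) ∏_{h=1}^{i-1}(q^h - 1)` in `ℚ(q)`. -/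
theorem stmt_2 (n a b i : ℕ) (hn : 1 ≤ n) (hab : a + b + 1 = n)
    (hi1 : b + 3 ≤ i) (hi2 : i ≤ n)
    (α : ℕ → ℤ)
    (hα1 : α 1 = (a : ℤ) + n)
    (hα2 : ∀ k, 2 ≤ k → k ≤ b + 1 → α k = (n : ℤ) - k + 1)
    (hα3 : ∀ k, b + 2 ≤ k → k ≤ n → α k = (n : ℤ) - k) :
    ∏ i' ∈ Icc 1 (i - 1), ((RatFunc.X : RatFunc ℚ) ^ (α i')
        - (RatFunc.X : RatFunc ℚ) ^ (α i))
      = (RatFunc.X : RatFunc ℚ) ^ (((i : ℤ) - 1) * ((n : ℤ) - i))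
        * (((RatFunc.X : RatFunc ℚ) ^ ((a : ℤ) + i) - 1)
            / ((RatFunc.X : RatFunc ℚ) ^ ((i : ℤ) - b - 1) - 1))
        * ∏ h ∈ Icc (1 : ℤ) ((i : ℤ) - 1), ((RatFunc.X : RatFunc ℚ) ^ h - 1) := by
  set x : RatFunc ℚ := RatFunc.X with hxdef
  have hx : x ≠ 0 := RatFunc.X_ne_zero
  have hαi : α i = (n : ℤ) - i := hα3 i (by omega) hi2
  -- nonvanishing of the denominator
  have hD : x ^ ((i : ℤ) - b - 1) - 1 ≠ 0 := by
    have : ((i : ℤ) - b - 1) = ((i - b - 1 : ℕ) : ℤ) := by omega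
    rw [this]
    exact sub_ne_zero_of_ne (xpow_ne_one _ (by omega))
  -- Step 1: factor out x^(n-i) from every factor
  have step1 : ∀ i' ∈ Icc 1 (i - 1),
      x ^ α i' - x ^ α i = x ^ ((n : ℤ) - i) * (x ^ (α i' - ((n : ℤ) - i)) - 1) := by
    intro i' _
    rw [hαi, mul_sub, mul_one, ← zpow_add₀ hx]
    congr 1
    ring
  rw [Finset.prod_congr rfl step1, Finset.prod_mul_distrib, Finset.prod_const, Nat.card_Icc,
    ← zpow_natCast (x ^ ((n : ℤ) - i)), ← zpow_mul]
  have hcard : ((n : ℤ) - i) * ((i - 1 + 1 - 1 : ℕ) : ℤ) = ((i : ℤ) - 1) * ((n : ℤ) - i) := by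
    have : ((i - 1 + 1 - 1 : ℕ) : ℤ) = (i : ℤ) - 1 := by omega
    rw [this]; ring
  rw [hcard]
  -- Step 2: compute the product of (x^(α i' - (n-i)) - 1)
  have key : ∏ i' ∈ Icc 1 (i - 1), (x ^ (α i' - ((n : ℤ) - i)) - 1)
      = (x ^ ((a : ℤ) + i) - 1) *
        ((∏ h ∈ Ioc (0 : ℤ) ((i : ℤ) - b - 2), (x ^ h - 1)) *
         ∏ h ∈ Ioc ((i : ℤ) - b - 1) ((i : ℤ) - 1), (x ^ h - 1)) := by
    rw [show Icc 1 (i - 1) = Ioc 0 (i - 1) from (Finset.Icc_add_one_left_eq_Ioc 0 (i - 1))]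
    rw [← Finset.prod_Ioc_consecutive _ (by omega : (0 : ℕ) ≤ b + 1) (by omega : b + 1 ≤ i - 1),
      ← Finset.prod_Ioc_consecutive _ (by omega : (0 : ℕ) ≤ 1) (by omega : 1 ≤ b + 1)]
    have h1 : ∏ i' ∈ Ioc (0 : ℕ) 1, (x ^ (α i' - ((n : ℤ) - i)) - 1)
        = x ^ ((a : ℤ) + i) - 1 := by
      rw [show Ioc (0 : ℕ) 1 = {1} from rfl, Finset.prod_singleton, hα1]
      congr 1
      ring
    have h2 : ∏ i' ∈ Ioc 1 (b + 1), (x ^ (α i' - ((n : ℤ) - i)) - 1)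
        = ∏ h ∈ Ioc ((i : ℤ) - b - 1) ((i : ℤ) - 1), (x ^ h - 1) := by
      refine Finset.prod_nbij' (fun i' => (i : ℤ) - i' + 1) (fun h => ((i : ℤ) - h + 1).toNat) ?_ ?_ ?_ ?_ ?_
      · intro k hk
        simp only [Finset.mem_Ioc] at hk ⊢
        omega
      · intro h hh
        simp only [Finset.mem_Ioc] at hh ⊢
        omega
      · intro k hk
        simp only [Finset.mem_Ioc] at hk
        omega
      · intro h hh
        simp only [Finset.mem_Ioc] at hh
        omega
      · intro k hk
        simp only [Finset.mem_Ioc] at hk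
        rw [hα2 k (by omega) (by omega)]
        congr 2
        ring
    have h3 : ∏ i' ∈ Ioc (b + 1) (i - 1), (x ^ (α i' - ((n : ℤ) - i)) - 1)
        = ∏ h ∈ Ioc (0 : ℤ) ((i : ℤ) - b - 2), (x ^ h - 1) := by
      refine Finset.prod_nbij' (fun i' => (i : ℤ) - i') (fun h => ((i : ℤ) - h).toNat) ?_ ?_ ?_ ?_ ?_
      · intro k hk
        simp only [Finset.mem_Ioc] at hk ⊢
        omega
      · intro h hh
        simp only [Finset.mem_Ioc] at hh ⊢
        omega
      · intro k hk
        simp only [Finset.mem_Ioc] at hk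
        omega
      · intro h hh
        simp only [Finset.mem_Ioc] at hh
        omega
      · intro k hk
        simp only [Finset.mem_Ioc] at hk
        rw [hα3 k (by omega) (by omega)]
        congr 2
        ring
    rw [h1, h2, h3]
    ring
  rw [key]
  -- Step 3: split the RHS product
  have hIcc : Icc (1 : ℤ) ((i : ℤ) - 1) = Ioc (0 : ℤ) ((i : ℤ) - 1) := by
    ext h
    simp only [Finset.mem_Icc, Finset.mem_Ioc]
    omega
  rw [hIcc,
    ← prod_Ioc_int _ (by omega : (0 : ℤ) ≤ (i : ℤ) - b - 1) (by omega : (i : ℤ) - b - 1 ≤ (i : ℤ) - 1),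
    ← prod_Ioc_int _ (by omega : (0 : ℤ) ≤ (i : ℤ) - b - 2) (by omega : (i : ℤ) - b - 2 ≤ (i : ℤ) - b - 1)]
  have hmid : Ioc ((i : ℤ) - b - 2) ((i : ℤ) - b - 1) = {(i : ℤ) - b - 1} := by
    ext h
    simp only [Finset.mem_Ioc, Finset.mem_singleton]
    omega
  rw [hmid, Finset.prod_singleton]
  field_simp
end

section
/- Let $n \geq 1$, $0 \leq a \leq n-1$, $b = n-a-1$, and $\alpha_{p,i}$ as above. Then for $2 \leq i \leq b+1$ we have $\prod_{i'=1}^{i-1}(q^{\alpha_{p,i'}} - q^{\alpha_{p,i}}) = q^{(i-1)(n-i)+i-1} \frac{q^{a+i-1}-1}{q^{i-1}-1} \prod_{h=1}^{i-1}(q^h - 1)$ in $\mathbb{Q}(q)$. -/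
open Finset

lemma prod_int_nat {M : Type*} [CommMonoid M] (m : ℕ) (f : ℤ → M) :
    ∏ h ∈ Icc (1:ℤ) (m:ℤ), f h = ∏ h ∈ Icc 1 m, f (h:ℤ) := by
  refine Finset.prod_nbij' (fun h => h.toNat) (fun h => (h:ℤ)) ?_ ?_ ?_ ?_ ?_ <;>
      simp only [mem_Icc] <;> intro x hx
  · omega
  · omega
  · omega
  · omega
  · congr 1; omega

lemma X_pow_sub_one_ne (m : ℕ) (hm : m ≠ 0) :
    (RatFunc.X : RatFunc ℚ) ^ (m:ℤ) - 1 ≠ 0 := by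
  rw [sub_ne_zero, zpow_natCast]
  intro h
  rw [← RatFunc.algebraMap_X (K := ℚ), ← map_pow, ← map_one (algebraMap (Polynomial ℚ) (RatFunc ℚ))] at h
  have h2 := RatFunc.algebraMap_injective ℚ h
  have h3 := congrArg Polynomial.natDegree h2
  simp at h3
  exact hm h3

/-- Same setting as Statement 2, for `2 ≤ i ≤ b+1`:
`∏_{i'=1}^{i-1} (q^{α_{p,i'}} - q^{α_{p,i}})
  = q^{(i-1)(n-i)+i-1} (q^{a+i-1}-1)/(q^{i-1}-1) ∏_{h=1}^{i-1}(q^h - 1)` in `ℚ(q)`. -/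
theorem stmt_4 (n a b i : ℕ) (hn : 1 ≤ n) (hab : a + b + 1 = n)
    (hi1 : 2 ≤ i) (hi2 : i ≤ b + 1)
    (α : ℕ → ℤ)
    (hα1 : α 1 = (a : ℤ) + n)
    (hα2 : ∀ k, 2 ≤ k → k ≤ b + 1 → α k = (n : ℤ) - k + 1)
    (hα3 : ∀ k, b + 2 ≤ k → k ≤ n → α k = (n : ℤ) - k) :
    ∏ i' ∈ Icc 1 (i - 1), ((RatFunc.X : RatFunc ℚ) ^ (α i')
        - (RatFunc.X : RatFunc ℚ) ^ (α i))
      = (RatFunc.X : RatFunc ℚ) ^ (((i : ℤ) - 1) * ((n : ℤ) - i) + ((i : ℤ) - 1))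
        * (((RatFunc.X : RatFunc ℚ) ^ ((a : ℤ) + i - 1) - 1)
            / ((RatFunc.X : RatFunc ℚ) ^ ((i : ℤ) - 1) - 1))
        * ∏ h ∈ Icc (1 : ℤ) ((i : ℤ) - 1), ((RatFunc.X : RatFunc ℚ) ^ h - 1) := by
  have hX : (RatFunc.X : RatFunc ℚ) ≠ 0 := RatFunc.X_ne_zero
  set X : RatFunc ℚ := RatFunc.X with hXdef
  have hαi : α i = (n:ℤ) - i + 1 := hα2 i hi1 hi2
  -- LHS
  have hIcc : Icc 1 (i-1) = Ico 1 i := by rw [← Finset.Ico_add_one_right_eq_Icc]; congr 1; omega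
  rw [hIcc, hαi, Finset.prod_eq_prod_Ico_succ_bot (by omega : 1 < i), hα1]
  have hL1 : X ^ ((a:ℤ)+n) - X ^ ((n:ℤ)-i+1)
      = X ^ ((n:ℤ)-i+1) * (X ^ ((a:ℤ)+i-1) - 1) := by
    rw [mul_sub, mul_one, ← zpow_add₀ hX]
    congr 2
    ring
  have hL2 : ∀ i' ∈ Ico 2 i, X ^ (α i') - X ^ ((n:ℤ)-i+1)
      = X ^ ((n:ℤ)-i+1) * (X ^ (((i - i' : ℕ)):ℤ) - 1) := by
    intro i' hi'
    simp only [mem_Ico] at hi'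
    rw [hα2 i' hi'.1 (by omega), mul_sub, mul_one, ← zpow_add₀ hX]
    congr 2
    push_cast [Nat.cast_sub (le_of_lt hi'.2)]
    ring
  rw [hL1, Finset.prod_congr rfl hL2, Finset.prod_mul_distrib, Finset.prod_const,
    Nat.card_Ico]
  -- reindex inner product
  have hre : ∏ i' ∈ Ico 2 i, (X ^ (((i - i' : ℕ)):ℤ) - 1)
      = ∏ h ∈ Icc 1 (i-2), (X ^ ((h:ℕ):ℤ) - 1) := by
    refine Finset.prod_nbij' (fun i' => i - i') (fun h => i - h) ?_ ?_ ?_ ?_ ?_ <;>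
        simp only [mem_Ico, mem_Icc] <;> intro x hx
    · omega
    · omega
    · omega
    · omega
    · trivial
  rw [hre]
  -- RHS
  rw [show (i:ℤ) - 1 = ((i-1:ℕ):ℤ) by omega, prod_int_nat,
    show i - 1 = (i-2)+1 by omega,
    Finset.prod_Icc_succ_top (by omega) (fun h : ℕ => X ^ (h:ℤ) - 1)]
  have hD : X ^ (((i-2)+1:ℕ):ℤ) - 1 ≠ 0 := X_pow_sub_one_ne _ (by omega)
  rw [show ((i-2)+1:ℕ) = i - 1 by omega] at hD ⊢
  -- combine powers of X
  rw [← zpow_natCast (X ^ ((n:ℤ)-i+1)) (i-2), ← zpow_mul]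
  have c1 : ((i-1:ℕ):ℤ) = (i:ℤ)-1 := by omega
  have c2 : ((i-2:ℕ):ℤ) = (i:ℤ)-2 := by omega
  rw [c1] at hD
  rw [c1, c2, show ((i:ℤ)-1)*((n:ℤ)-i)+((i:ℤ)-1)
      = ((n:ℤ)-i+1) + ((n:ℤ)-i+1)*((i:ℤ)-2) by ring]
  set u := X ^ ((n:ℤ)-i+1) with hu
  set v := X ^ (((n:ℤ)-i+1)*((i:ℤ)-2)) with hv
  set A := X ^ ((a:ℤ)+i-1) - 1 with hA
  set D := X ^ ((i:ℤ)-1) - 1 with hDd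
  set P := ∏ h ∈ Icc 1 (i-2), (X ^ (h:ℤ) - 1) with hP
  rw [show X ^ ((n:ℤ)-i+1 + ((n:ℤ)-i+1)*((i:ℤ)-2)) = u * v by
      rw [hu, hv, ← zpow_add₀ hX],
    mul_comm P D, show u * v * (A / D) * (D * P) = (u * v) * ((A / D) * D) * P by ring,
    div_mul_cancel₀ A hD]
  ring
end
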